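/- Let p be a prime, C an [n,k] linear code over 𝔽_p with dual C^⊥, and let 𝒞 = {(c_1, c_2) ∈ 𝔽_p^n × 𝔽_p^n : c_1 ∈ C^⊥, c_2 ∈ C}. Then 𝒞 is self-dual with respect to the form (c_1,c_2) ⊙ (c_1',c_2') = c_1·c_2' + c_2·c_1', and moreover the Construction A lattice Λ(𝒞) is even and self-dual with respect to the corresponding Lorentzian form, for all primes p (including p = 2). -/

import Mathlib

open Matrix

/-- The inner product on `𝔽_p^{2n}` with respect to the off-diagonal Lorentzian metric
`η = [[0,I_n],[I_n,0]]`: `(c₁,c₂) ⊙ (c₁',c₂') = c₁·c₂' + c₂·c₁'`. -/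
def etaDot (p n : ℕ) (c c' : Fin n ⊕ Fin n → ZMod p) : ZMod p :=
  ∑ i : Fin n, (c (Sum.inl i) * c' (Sum.inr i) + c (Sum.inr i) * c' (Sum.inl i))

/-- The dual code with respect to `⊙` mod `p`. -/
def dualCode (p n : ℕ) (𝒞 : Set (Fin n ⊕ Fin n → ZMod p)) :
    Set (Fin n ⊕ Fin n → ZMod p) :=
  {c' | ∀ c ∈ 𝒞, etaDot p n c' c = 0}

/-- The Construction A lattice `Λ(𝒞) = {v/√p : v ∈ ℤ^{2n}, v mod p ∈ 𝒞}`. -/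
def latticeA (p n : ℕ) (𝒞 : Set (Fin n ⊕ Fin n → ZMod p)) :
    Set (Fin n ⊕ Fin n → ℝ) :=
  {x | ∃ v : Fin n ⊕ Fin n → ℤ, (fun i => ((v i : ZMod p))) ∈ 𝒞 ∧
        x = fun i => (v i : ℝ) / Real.sqrt p}

/-- The real bilinear form `λ ⊙ λ'` with respect to `η = [[0,I_n],[I_n,0]]`. -/
def etaDotR (n : ℕ) (x y : Fin n ⊕ Fin n → ℝ) : ℝ :=
  ∑ i : Fin n, (x (Sum.inl i) * y (Sum.inr i) + x (Sum.inr i) * y (Sum.inl i))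

/-- The dual lattice with respect to `⊙`. -/
def dualLattice (n : ℕ) (Λ : Set (Fin n ⊕ Fin n → ℝ)) :
    Set (Fin n ⊕ Fin n → ℝ) :=
  {y | ∀ x ∈ Λ, ∃ m : ℤ, etaDotR n y x = m}

/-! ### Auxiliary lemmas -/

lemma cast_etaSum (p n : ℕ) (v u : Fin n ⊕ Fin n → ℤ) :
    ((∑ i : Fin n, (v (Sum.inl i) * u (Sum.inr i) + v (Sum.inr i) * u (Sum.inl i)) : ℤ) : ZMod p)
      = etaDot p n (fun j => (v j : ZMod p)) (fun j => (u j : ZMod p)) := by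
  unfold etaDot; push_cast; rfl

lemma etaDotR_div (p n : ℕ) (hp : 0 < p) (v u : Fin n ⊕ Fin n → ℤ) :
    etaDotR n (fun i => (v i : ℝ) / Real.sqrt p) (fun i => (u i : ℝ) / Real.sqrt p)
      = ((∑ i : Fin n, (v (Sum.inl i) * u (Sum.inr i) + v (Sum.inr i) * u (Sum.inl i)) : ℤ) : ℝ)
          / p := by
  have hs : Real.sqrt p * Real.sqrt p = p := Real.mul_self_sqrt (by positivity)
  unfold etaDotR
  push_cast
  rw [Finset.sum_div]
  refine Finset.sum_congr rfl fun i _ => ?_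
  rw [div_mul_div_comm, div_mul_div_comm, hs, add_div]

section
variable (p n : ℕ) [Fact p.Prime]

noncomputable def dotB : LinearMap.BilinForm (ZMod p) (Fin n → ZMod p) :=
  LinearMap.mk₂ (ZMod p) (· ⬝ᵥ ·)
    (fun x y z => add_dotProduct x y z)
    (fun a x y => smul_dotProduct a x y)
    (fun x y z => dotProduct_add x y z)
    (fun a x y => dotProduct_smul a x y)

lemma dotB_apply (x y : Fin n → ZMod p) : dotB p n x y = x ⬝ᵥ y := rfl

lemma dotB_nondeg : (dotB p n).Nondegenerate := by
  refine ⟨fun x hx => ?_, fun x hx => ?_⟩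
  all_goals
    funext i
    have := hx (Pi.single i 1)
    simpa [dotB_apply, dotProduct, Pi.single_apply] using this

lemma dotB_refl : (dotB p n).IsRefl := by
  intro x y h
  rw [dotB_apply, dotProduct_comm]; exact h

lemma double_dual (C : Submodule (ZMod p) (Fin n → ZMod p)) (w : Fin n → ZMod p)
    (hw : ∀ c', (∀ c ∈ C, c ⬝ᵥ c' = 0) → w ⬝ᵥ c' = 0) : w ∈ C := by
  have key : (dotB p n).orthogonal ((dotB p n).orthogonal C) = C :=
    LinearMap.BilinForm.orthogonal_orthogonal (dotB_nondeg p n) (dotB_refl p n) C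
  rw [← key]
  intro c' hc'
  have h1 : ∀ c ∈ C, c ⬝ᵥ c' = 0 := fun c hc => hc' c hc
  exact dotB_refl p n w c' (hw c' h1)

end

lemma latticeA_even (p n : ℕ) (hp : p.Prime) (𝒞 : Set (Fin n ⊕ Fin n → ZMod p))
    (hdiag : ∀ c ∈ 𝒞, ∑ i : Fin n, c (Sum.inl i) * c (Sum.inr i) = 0) :
    ∀ x ∈ latticeA p n 𝒞, ∃ m : ℤ, etaDotR n x x = 2 * m := by
  rintro x ⟨v, hv, rfl⟩
  have hT : ((∑ i : Fin n, v (Sum.inl i) * v (Sum.inr i) : ℤ) : ZMod p) = 0 := by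
    push_cast
    exact hdiag _ hv
  rw [ZMod.intCast_zmod_eq_zero_iff_dvd] at hT
  obtain ⟨m, hm⟩ := hT
  refine ⟨m, ?_⟩
  rw [etaDotR_div p n hp.pos]
  have hS : (∑ i : Fin n, (v (Sum.inl i) * v (Sum.inr i) + v (Sum.inr i) * v (Sum.inl i)) : ℤ)
      = 2 * ((p : ℤ) * m) := by
    rw [← hm, Finset.mul_sum]
    exact Finset.sum_congr rfl fun i _ => by ring
  rw [hS]
  have hp0 : (p : ℝ) ≠ 0 := by exact_mod_cast hp.pos.ne'
  push_cast
  field_simp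

lemma latticeA_selfdual (p n : ℕ) (hp : p.Prime) (𝒞 : Set (Fin n ⊕ Fin n → ZMod p))
    (hC : dualCode p n 𝒞 = 𝒞) :
    dualLattice n (latticeA p n 𝒞) = latticeA p n 𝒞 := by
  haveI := Fact.mk hp
  have hp0 : (p : ℝ) ≠ 0 := by exact_mod_cast hp.pos.ne'
  have hs0 : Real.sqrt p ≠ 0 :=
    Real.sqrt_ne_zero'.mpr (by exact_mod_cast hp.pos)
  have h0 : (0 : Fin n ⊕ Fin n → ZMod p) ∈ 𝒞 := by
    rw [← hC]; intro c hc; simp [etaDot]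
  ext y
  constructor
  · intro hy
    set b : (Fin n ⊕ Fin n) → (Fin n ⊕ Fin n) → ℤ :=
      fun j k => if k = j then (p : ℤ) else 0 with hbdef
    have hbmem : ∀ j, (fun k => (b j k : ℝ) / Real.sqrt p) ∈ latticeA p n 𝒞 := by
      intro j
      refine ⟨b j, ?_, rfl⟩
      have he : (fun k => ((b j k : ZMod p))) = 0 := by
        funext k
        simp only [hbdef]
        split <;> simp
      rw [he]; exact h0
    have hxval : ∀ j k, ((b j k : ℝ) / Real.sqrt p)
        = if k = j then Real.sqrt p else 0 := by
      intro j k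
      simp only [hbdef]
      split <;> simp [Real.div_sqrt]
    have hcoord : ∀ j, ∃ m : ℤ, y j = m / Real.sqrt p := by
      intro j
      obtain ⟨m, hm⟩ := hy _ (hbmem (Sum.swap j))
      refine ⟨m, ?_⟩
      have hev : etaDotR n y (fun k => (b (Sum.swap j) k : ℝ) / Real.sqrt p)
          = y j * Real.sqrt p := by
        unfold etaDotR
        cases j with
        | inl i =>
          simp [hxval, Sum.inr.injEq, mul_ite, Finset.sum_ite_eq']
        | inr i =>
          simp [hxval, Sum.inl.injEq, mul_ite, Finset.sum_ite_eq']
      rw [hev] at hm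
      field_simp
      linarith [hm]
    choose v hvy using hcoord
    have hyeq : y = fun j => (v j : ℝ) / Real.sqrt p := funext hvy
    refine ⟨v, ?_, hyeq⟩
    rw [← hC]
    intro c hc
    set u : Fin n ⊕ Fin n → ℤ := fun j => ((c j).val : ℤ) with hudef
    have hu : (fun j => ((u j : ZMod p))) = c := by
      funext j
      simp [hudef, ZMod.natCast_val, ZMod.cast_id]
    have humem : (fun k => (u k : ℝ) / Real.sqrt p) ∈ latticeA p n 𝒞 := by
      refine ⟨u, ?_, rfl⟩
      rw [hu]; exact hc
    obtain ⟨m, hm⟩ := hy _ humem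
    rw [hyeq, etaDotR_div p n hp.pos] at hm
    have hSm : (∑ i : Fin n, (v (Sum.inl i) * u (Sum.inr i) + v (Sum.inr i) * u (Sum.inl i)) : ℤ)
        = p * m := by
      have : ((∑ i : Fin n, (v (Sum.inl i) * u (Sum.inr i) + v (Sum.inr i) * u (Sum.inl i)) : ℤ) : ℝ)
          = ((p * m : ℤ) : ℝ) := by
        push_cast
        field_simp at hm
        exact_mod_cast hm
      exact_mod_cast this
    have : ((∑ i : Fin n, (v (Sum.inl i) * u (Sum.inr i) + v (Sum.inr i) * u (Sum.inl i)) : ℤ)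
        : ZMod p) = 0 := by
      rw [hSm]; push_cast; simp
    rw [cast_etaSum, hu] at this
    exact this
  · rintro ⟨v, hv, rfl⟩
    rintro x ⟨u, hu, rfl⟩
    have hvd : (fun i => ((v i : ZMod p))) ∈ dualCode p n 𝒞 := by rw [hC]; exact hv
    have h0' : ((∑ i : Fin n, (v (Sum.inl i) * u (Sum.inr i) + v (Sum.inr i) * u (Sum.inl i)) : ℤ)
        : ZMod p) = 0 := by
      rw [cast_etaSum]
      exact hvd _ hu
    rw [ZMod.intCast_zmod_eq_zero_iff_dvd] at h0'
    obtain ⟨m, hm⟩ := h0'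
    refine ⟨m, ?_⟩
    rw [etaDotR_div p n hp.pos, hm]
    push_cast
    field_simp


/-- CSS construction: for a linear code `C` over `𝔽_p` with dual `C^⊥`, the code
`𝒞 = {(c₁,c₂) : c₁ ∈ C^⊥, c₂ ∈ C}` is self-dual with respect to `⊙`, and the
Construction A lattice `Λ(𝒞)` is self-dual and even — for every prime `p`, including
`p = 2`. -/
theorem stmt10 (p n : ℕ) (hp : p.Prime)
    (C : Submodule (ZMod p) (Fin n → ZMod p)) :
    let Cperp : Set (Fin n → ZMod p) := {c' | ∀ c ∈ C, c ⬝ᵥ c' = 0}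
    let 𝒞 : Set (Fin n ⊕ Fin n → ZMod p) :=
      {w | (fun i => w (Sum.inl i)) ∈ Cperp ∧ (fun i => w (Sum.inr i)) ∈ C}
    dualCode p n 𝒞 = 𝒞 ∧
    dualLattice n (latticeA p n 𝒞) = latticeA p n 𝒞 ∧
    (∀ x ∈ latticeA p n 𝒞, ∃ m : ℤ, etaDotR n x x = 2 * m) := by
  intro Cperp 𝒞
  haveI := Fact.mk hp
  have h1 : dualCode p n 𝒞 = 𝒞 := by
    ext w
    simp only [dualCode, Set.mem_setOf_eq]
    constructor
    · intro hw
      constructor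
      · intro c hc
        have hm : Sum.elim (0 : Fin n → ZMod p) c ∈ 𝒞 := by
          constructor
          · show (fun i => Sum.elim (0 : Fin n → ZMod p) c (Sum.inl i)) ∈ Cperp
            intro a _
            simp [dotProduct]
          · show (fun i => c i) ∈ C
            simpa using hc
        have := hw _ hm
        simp only [etaDot, Sum.elim_inl, Sum.elim_inr, Pi.zero_apply, mul_zero, add_zero] at this
        simpa [dotProduct, mul_comm] using this
      · apply double_dual p n C
        intro c' hc'
        have hm : Sum.elim c' (0 : Fin n → ZMod p) ∈ 𝒞 := by
          refine ⟨?_, Submodule.zero_mem C⟩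
          show (fun i => c' i) ∈ Cperp
          exact hc'
        have := hw _ hm
        simp only [etaDot, Sum.elim_inl, Sum.elim_inr, Pi.zero_apply, mul_zero, zero_add] at this
        simpa [dotProduct] using this
    · intro hw c hc
      obtain ⟨hw1, hw2⟩ := hw
      obtain ⟨hc1, hc2⟩ := hc
      have e1 : ∑ i : Fin n, w (Sum.inl i) * c (Sum.inr i) = 0 := by
        have := hw1 _ hc2
        simpa [dotProduct, mul_comm] using this
      have e2 : ∑ i : Fin n, w (Sum.inr i) * c (Sum.inl i) = 0 := by
        have := hc1 _ hw2
        simpa [dotProduct] using this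
      simp [etaDot, Finset.sum_add_distrib, e1, e2]
  have hdiag : ∀ c ∈ 𝒞, ∑ i : Fin n, c (Sum.inl i) * c (Sum.inr i) = 0 := by
    intro c hc
    have := hc.1 _ hc.2
    simpa [dotProduct, mul_comm] using this
  exact ⟨h1, latticeA_selfdual p n hp 𝒞 h1, latticeA_even p n hp 𝒞 hdiag⟩
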